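/- Let r be a positive integer. For any coloring c of the points of the Euclidean space E^(r+4) with r colors (c mapping points to Fin r), either there exist four points p₁, p₂, p₃, p₄ with dist(p₁,p₂) = dist(p₂,p₃) = dist(p₃,p₄) = dist(p₄,p₁) = 1 and dist(p₁,p₃) = dist(p₂,p₄) = √2 all receiving the same color (a monochromatic unit square), or there exist three pairwise equidistant points at some positive common distance receiving pairwise distinct colors (a rainbow equilateral triangle). -/

import Mathlib

noncomputable section EuclideanRamseyHelpers

open EuclideanSpace

section InnerHelpers

variable {F : Type*} [NormedAddCommGroup F] [InnerProductSpace ℝ F]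

lemma inner_cross_zero (p q s t : F)
    (hpt : dist p t = 1) (hqs : dist q s = 1) (hps : dist p s = 1) (hqt : dist q t = 1) :
    (inner ℝ (p - q) (s - t) : ℝ) = 0 := by
  have e1 := norm_sub_sq_real p t
  have e2 := norm_sub_sq_real q s
  have e3 := norm_sub_sq_real p s
  have e4 := norm_sub_sq_real q t
  rw [← dist_eq_norm, hpt] at e1
  rw [← dist_eq_norm, hqs] at e2
  rw [← dist_eq_norm, hps] at e3
  rw [← dist_eq_norm, hqt] at e4
  simp only [inner_sub_left, inner_sub_right]
  norm_num at e1 e2 e3 e4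
  linarith

omit [InnerProductSpace ℝ F] in
lemma dist_eq_of_sub_eq {a b s t : F} (h : a - b = s - t) : dist a b = dist s t := by
  rw [dist_eq_norm, h, ← dist_eq_norm]

lemma dist_sqrt_two (a b p q s t : F) (h : a - b = (p - q) + (s - t))
    (hpq : dist p q = 1) (hst : dist s t = 1)
    (hpt : dist p t = 1) (hqs : dist q s = 1) (hps : dist p s = 1) (hqt : dist q t = 1) :
    dist a b = Real.sqrt 2 := by
  have hz := inner_cross_zero p q s t hpt hqs hps hqt
  have hn : ‖(p - q) + (s - t)‖ ^ 2 = 2 := by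
    rw [norm_add_sq_real, hz, ← dist_eq_norm p q, ← dist_eq_norm s t, hpq, hst]
    norm_num
  rw [dist_eq_norm, h, show (2:ℝ) = ‖(p - q) + (s - t)‖ ^ 2 from hn.symm,
    Real.sqrt_sq (norm_nonneg _)]

end InnerHelpers

lemma eq_one_of_sq {x : ℝ} (h : x^2 = 1) (hx : 0 ≤ x) : x = 1 := by
  nlinarith [sq_nonneg (x-1), sq_nonneg (x+1)]

lemma norm_eq_sqrt_two {F : Type*} [NormedAddCommGroup F] (w : F) (h : ‖w‖^2 = 2) :
    ‖w‖ = Real.sqrt 2 := by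
  rw [show (2:ℝ) = ‖w‖^2 from h.symm, Real.sqrt_sq (norm_nonneg _)]

lemma dist_single_single' {n : ℕ} (a b : Fin n) (hab : a ≠ b) :
    dist (single a (Real.sqrt 2 / 2) : EuclideanSpace ℝ (Fin n)) (single b (Real.sqrt 2 / 2)) = 1 := by
  have hs2 : Real.sqrt 2 ^ 2 = 2 := Real.sq_sqrt (by norm_num)
  apply eq_one_of_sq _ dist_nonneg
  rw [dist_eq_norm, norm_sub_sq_real]
  simp only [EuclideanSpace.inner_single_left, EuclideanSpace.single_apply, if_neg hab,
    mul_zero, starRingEnd_apply, star_trivial, EuclideanSpace.norm_single, Real.norm_eq_abs]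
  rw [abs_of_nonneg (by positivity)]
  linear_combination (1/2) * hs2

lemma dist_q_single {n : ℕ} (hn : 6 ≤ n) (i : Fin 6) :
    dist (∑ j : Fin 6, (single (Fin.castLE hn j) ((Real.sqrt 2 + Real.sqrt 14)/12) : EuclideanSpace ℝ (Fin n)))
      (single (Fin.castLE hn i) (Real.sqrt 2 / 2)) = 1 := by
  have hs2 : Real.sqrt 2 ^ 2 = 2 := Real.sq_sqrt (by norm_num)
  have hu2 : Real.sqrt 14 ^ 2 = 14 := Real.sq_sqrt (by norm_num)
  set t : ℝ := (Real.sqrt 2 + Real.sqrt 14)/12 with ht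
  set ρ : ℝ := Real.sqrt 2 / 2 with hρ
  set q : EuclideanSpace ℝ (Fin n) := ∑ j : Fin 6, single (Fin.castLE hn j) t with hq
  have hinj : Function.Injective (Fin.castLE hn) := Fin.castLE_injective hn
  have hstep : ∀ j : Fin 6, (inner ℝ q (single (Fin.castLE hn j) t) : ℝ) = t^2 := by
    intro j
    rw [hq, sum_inner, Finset.sum_eq_single j]
    · rw [EuclideanSpace.inner_single_left, EuclideanSpace.single_apply, if_pos rfl]
      simp [sq]
    · intro k _ hkj
      rw [EuclideanSpace.inner_single_left, EuclideanSpace.single_apply,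
        if_neg (fun h => hkj (hinj h))]
      simp
    · simp
  have hqq : (inner ℝ q q : ℝ) = 6 * t^2 := by
    conv_lhs => rw [hq]
    rw [inner_sum]
    rw [Finset.sum_congr rfl (fun j _ => hstep j), Finset.sum_const, Finset.card_univ]
    simp only [Fintype.card_fin, nsmul_eq_mul]
    push_cast
    ring
  have hqp : (inner ℝ q (single (Fin.castLE hn i) ρ) : ℝ) = t * ρ := by
    rw [hq, sum_inner, Finset.sum_eq_single i]
    · rw [EuclideanSpace.inner_single_left, EuclideanSpace.single_apply, if_pos rfl]
      simp
    · intro k _ hki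
      rw [EuclideanSpace.inner_single_left, EuclideanSpace.single_apply,
        if_neg (fun h => hki (hinj h))]
      simp
    · simp
  have hpp : (inner ℝ (single (Fin.castLE hn i) ρ : EuclideanSpace ℝ (Fin n)) (single (Fin.castLE hn i) ρ) : ℝ) = ρ^2 := by
    rw [EuclideanSpace.inner_single_left, EuclideanSpace.single_apply, if_pos rfl]
    simp [sq]
  apply eq_one_of_sq _ dist_nonneg
  rw [dist_eq_norm, norm_sub_sq_real, ← real_inner_self_eq_norm_sq, ← real_inner_self_eq_norm_sq,
    hqq, hqp, hpp]
  rw [ht, hρ]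
  linear_combination (5/24) * hs2 + (1/24) * hu2

lemma simplex7 {n : ℕ} (hn : 6 ≤ n) :
    ∃ P : Fin 7 → EuclideanSpace ℝ (Fin n), ∀ i j, i ≠ j → dist (P i) (P j) = 1 := by
  classical
  refine ⟨fun k => if h : (k : ℕ) < 6 then single (Fin.castLE hn ⟨k, h⟩) (Real.sqrt 2 / 2)
    else ∑ j : Fin 6, single (Fin.castLE hn j) ((Real.sqrt 2 + Real.sqrt 14)/12), ?_⟩
  intro i j hij
  dsimp only
  by_cases hi : (i : ℕ) < 6 <;> by_cases hj : (j : ℕ) < 6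
  · rw [dif_pos hi, dif_pos hj]
    refine dist_single_single' _ _ (fun h => hij (Fin.ext ?_))
    simpa using congrArg Fin.val (Fin.castLE_injective hn h)
  · rw [dif_pos hi, dif_neg hj, dist_comm]
    exact dist_q_single hn _
  · rw [dif_neg hi, dif_pos hj]
    exact dist_q_single hn _
  · have h7i := i.2
    have h7j := j.2
    exact absurd (Fin.ext (by omega : (i:ℕ) = (j:ℕ))) hij

lemma fifth_index : ∀ i j k l : Fin 7, ∃ m : Fin 7, m ≠ i ∧ m ≠ j ∧ m ≠ k ∧ m ≠ l := by
  decide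

lemma exists_four {α : Type*} [DecidableEq α] (s : Finset α) (h : 4 ≤ s.card) :
    ∃ i j k l, i ∈ s ∧ j ∈ s ∧ k ∈ s ∧ l ∈ s ∧
      i ≠ j ∧ i ≠ k ∧ i ≠ l ∧ j ≠ k ∧ j ≠ l ∧ k ≠ l := by
  obtain ⟨i, hi⟩ := Finset.card_pos.mp (show 0 < s.card by omega)
  have c1 : 3 ≤ (s.erase i).card := by
    rw [Finset.card_erase_of_mem hi]; omega
  obtain ⟨j, hj⟩ := Finset.card_pos.mp (show 0 < (s.erase i).card by omega)
  have c2 : 2 ≤ ((s.erase i).erase j).card := by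
    rw [Finset.card_erase_of_mem hj]; omega
  obtain ⟨k, hk⟩ := Finset.card_pos.mp (show 0 < ((s.erase i).erase j).card by omega)
  have c3 : 1 ≤ (((s.erase i).erase j).erase k).card := by
    rw [Finset.card_erase_of_mem hk]; omega
  obtain ⟨l, hl⟩ := Finset.card_pos.mp (show 0 < (((s.erase i).erase j).erase k).card by omega)
  simp only [Finset.mem_erase] at hj hk hl
  exact ⟨i, j, k, l, hi, hj.2, hk.2.2, hl.2.2.2,
    fun h => hj.1 h.symm, fun h => hk.2.1 h.symm, fun h => hl.2.2.1 h.symm,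
    fun h => hk.1 h.symm, fun h => hl.2.1 h.symm, fun h => hl.1 h.symm⟩

lemma four_of_seven (b : Fin 7 → Bool) : ∃ i j k l : Fin 7,
    i ≠ j ∧ i ≠ k ∧ i ≠ l ∧ j ≠ k ∧ j ≠ l ∧ k ≠ l ∧ b j = b i ∧ b k = b i ∧ b l = b i := by
  classical
  set s := Finset.univ.filter (fun i => b i = true) with hs
  set t := Finset.univ.filter (fun i => ¬ (b i = true)) with ht'
  have hcard : s.card + t.card = 7 := by
    rw [hs, ht']
    rw [Finset.card_filter_add_card_filter_not]
    simp
  have : 4 ≤ s.card ∨ 4 ≤ t.card := by omega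
  rcases this with h | h
  · obtain ⟨i, j, k, l, hi, hj, hk, hl, hne⟩ := exists_four s h
    simp only [hs, Finset.mem_filter] at hi hj hk hl
    exact ⟨i, j, k, l, hne.1, hne.2.1, hne.2.2.1, hne.2.2.2.1, hne.2.2.2.2.1, hne.2.2.2.2.2,
      hj.2.trans hi.2.symm, hk.2.trans hi.2.symm, hl.2.trans hi.2.symm⟩
  · obtain ⟨i, j, k, l, hi, hj, hk, hl, hne⟩ := exists_four t h
    simp only [ht', Finset.mem_filter, Bool.not_eq_true] at hi hj hk hl
    exact ⟨i, j, k, l, hne.1, hne.2.1, hne.2.2.1, hne.2.2.2.1, hne.2.2.2.2.1, hne.2.2.2.2.2,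
      hj.2.trans hi.2.symm, hk.2.trans hi.2.symm, hl.2.trans hi.2.symm⟩

set_option maxHeartbeats 2000000 in
lemma endgame {F : Type*} [NormedAddCommGroup F] [InnerProductSpace ℝ F]
    {α : Type*} (c : F → α) (x1 x2 x3 x4 x5 : F)
    (d12 : dist x1 x2 = 1) (d13 : dist x1 x3 = 1) (d14 : dist x1 x4 = 1)
    (d15 : dist x1 x5 = 1) (d23 : dist x2 x3 = 1) (d24 : dist x2 x4 = 1)
    (d25 : dist x2 x5 = 1) (d34 : dist x3 x4 = 1) (d35 : dist x3 x5 = 1)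
    (d45 : dist x4 x5 = 1)
    (hc2 : c x2 = c x1) (hc3 : c x3 = c x1) (hc4 : c x4 = c x1) :
    (∃ p₁ p₂ p₃ p₄ : F,
      dist p₁ p₂ = 1 ∧ dist p₂ p₃ = 1 ∧ dist p₃ p₄ = 1 ∧ dist p₄ p₁ = 1 ∧
      dist p₁ p₃ = Real.sqrt 2 ∧ dist p₂ p₄ = Real.sqrt 2 ∧
      c p₁ = c p₂ ∧ c p₂ = c p₃ ∧ c p₃ = c p₄) ∨
    (∃ (A B C : F) (d : ℝ), 0 < d ∧
      dist A B = d ∧ dist B C = d ∧ dist A C = d ∧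
      c A ≠ c B ∧ c A ≠ c C ∧ c B ≠ c C) := by
  have hc1 : c x1 = c x1 := rfl
  by_cases h13 : c (x1 + x3 - x5) = c x1
  case pos =>
    by_cases h12 : c (x1 + x2 - x5) = c x1
    · refine Or.inl ⟨x2, x3, (x1 + x3 - x5), (x1 + x2 - x5), ?_, ?_, ?_, ?_, ?_, ?_, ?_, ?_, ?_⟩
      · exact d23
      · exact ((dist_eq_of_sub_eq (show x3 - (x1 + x3 - x5) = x5 - x1 by abel)).trans ((dist_comm x5 x1).trans d15))
      · exact ((dist_eq_of_sub_eq (show (x1 + x3 - x5) - (x1 + x2 - x5) = x3 - x2 by abel)).trans ((dist_comm x3 x2).trans d23))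
      · exact ((dist_eq_of_sub_eq (show (x1 + x2 - x5) - x2 = x1 - x5 by abel)).trans d15)
      · exact (dist_sqrt_two x2 (x1 + x3 - x5) x2 x1 x5 x3 (by abel) ((dist_comm x2 x1).trans d12) ((dist_comm x5 x3).trans d35) d23 d15 d25 d13)
      · exact (dist_sqrt_two x3 (x1 + x2 - x5) x3 x1 x5 x2 (by abel) ((dist_comm x3 x1).trans d13) ((dist_comm x5 x2).trans d25) ((dist_comm x3 x2).trans d23) d15 d35 d12)
      · exact hc2.trans hc3.symm
      · exact hc3.trans h13.symm
      · exact h13.trans h12.symm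
    by_cases h14 : c (x1 + x4 - x5) = c x1
    · refine Or.inl ⟨x4, x3, (x1 + x3 - x5), (x1 + x4 - x5), ?_, ?_, ?_, ?_, ?_, ?_, ?_, ?_, ?_⟩
      · exact ((dist_comm x4 x3).trans d34)
      · exact ((dist_eq_of_sub_eq (show x3 - (x1 + x3 - x5) = x5 - x1 by abel)).trans ((dist_comm x5 x1).trans d15))
      · exact ((dist_eq_of_sub_eq (show (x1 + x3 - x5) - (x1 + x4 - x5) = x3 - x4 by abel)).trans d34)
      · exact ((dist_eq_of_sub_eq (show (x1 + x4 - x5) - x4 = x1 - x5 by abel)).trans d15)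
      · exact (dist_sqrt_two x4 (x1 + x3 - x5) x4 x1 x5 x3 (by abel) ((dist_comm x4 x1).trans d14) ((dist_comm x5 x3).trans d35) ((dist_comm x4 x3).trans d34) d15 d45 d13)
      · exact (dist_sqrt_two x3 (x1 + x4 - x5) x3 x1 x5 x4 (by abel) ((dist_comm x3 x1).trans d13) ((dist_comm x5 x4).trans d45) d34 d15 d35 d14)
      · exact hc4.trans hc3.symm
      · exact hc3.trans h13.symm
      · exact h13.trans h14.symm
    by_cases h34 : c (x3 + x4 - x5) = c x1
    · refine Or.inl ⟨x4, x1, (x1 + x3 - x5), (x3 + x4 - x5), ?_, ?_, ?_, ?_, ?_, ?_, ?_, ?_, ?_⟩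
      · exact ((dist_comm x4 x1).trans d14)
      · exact ((dist_eq_of_sub_eq (show x1 - (x1 + x3 - x5) = x5 - x3 by abel)).trans ((dist_comm x5 x3).trans d35))
      · exact ((dist_eq_of_sub_eq (show (x1 + x3 - x5) - (x3 + x4 - x5) = x1 - x4 by abel)).trans d14)
      · exact ((dist_eq_of_sub_eq (show (x3 + x4 - x5) - x4 = x3 - x5 by abel)).trans d35)
      · exact (dist_sqrt_two x4 (x1 + x3 - x5) x4 x1 x5 x3 (by abel) ((dist_comm x4 x1).trans d14) ((dist_comm x5 x3).trans d35) ((dist_comm x4 x3).trans d34) d15 d45 d13)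
      · exact (dist_sqrt_two x1 (x3 + x4 - x5) x1 x3 x5 x4 (by abel) d13 ((dist_comm x5 x4).trans d45) d14 d35 d15 d34)
      · exact hc4.trans hc1.symm
      · exact hc1.trans h13.symm
      · exact h13.trans h34.symm
    by_cases h23 : c (x2 + x3 - x5) = c x1
    · refine Or.inl ⟨x2, x1, (x1 + x3 - x5), (x2 + x3 - x5), ?_, ?_, ?_, ?_, ?_, ?_, ?_, ?_, ?_⟩
      · exact ((dist_comm x2 x1).trans d12)
      · exact ((dist_eq_of_sub_eq (show x1 - (x1 + x3 - x5) = x5 - x3 by abel)).trans ((dist_comm x5 x3).trans d35))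
      · exact ((dist_eq_of_sub_eq (show (x1 + x3 - x5) - (x2 + x3 - x5) = x1 - x2 by abel)).trans d12)
      · exact ((dist_eq_of_sub_eq (show (x2 + x3 - x5) - x2 = x3 - x5 by abel)).trans d35)
      · exact (dist_sqrt_two x2 (x1 + x3 - x5) x2 x1 x5 x3 (by abel) ((dist_comm x2 x1).trans d12) ((dist_comm x5 x3).trans d35) d23 d15 d25 d13)
      · exact (dist_sqrt_two x1 (x2 + x3 - x5) x1 x2 x5 x3 (by abel) d12 ((dist_comm x5 x3).trans d35) d13 d25 d15 d23)
      · exact hc2.trans hc1.symm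
      · exact hc1.trans h13.symm
      · exact h13.trans h23.symm
    rcases eq_or_ne (c (x1 + x2 - x5)) (c (x1 + x4 - x5)) with e1 | hnee1
    · -- inl
      rcases eq_or_ne (c (x1 + x4 - x5)) (c (x3 + x4 - x5)) with e2 | hnee2
      · -- inl
        rcases eq_or_ne (c (x3 + x4 - x5)) (c (x2 + x3 - x5)) with e3 | hnee3
        · -- inl
          refine Or.inl ⟨(x1 + x2 - x5), (x1 + x4 - x5), (x3 + x4 - x5), (x2 + x3 - x5), ?_, ?_, ?_, ?_, ?_, ?_, ?_, ?_, ?_⟩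
          · exact ((dist_eq_of_sub_eq (show (x1 + x2 - x5) - (x1 + x4 - x5) = x2 - x4 by abel)).trans d24)
          · exact ((dist_eq_of_sub_eq (show (x1 + x4 - x5) - (x3 + x4 - x5) = x1 - x3 by abel)).trans d13)
          · exact ((dist_eq_of_sub_eq (show (x3 + x4 - x5) - (x2 + x3 - x5) = x4 - x2 by abel)).trans ((dist_comm x4 x2).trans d24))
          · exact ((dist_eq_of_sub_eq (show (x2 + x3 - x5) - (x1 + x2 - x5) = x3 - x1 by abel)).trans ((dist_comm x3 x1).trans d13))
          · exact (dist_sqrt_two (x1 + x2 - x5) (x3 + x4 - x5) x1 x3 x2 x4 (by abel) d13 d24 d14 ((dist_comm x3 x2).trans d23) d12 d34)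
          · exact (dist_sqrt_two (x1 + x4 - x5) (x2 + x3 - x5) x1 x2 x4 x3 (by abel) d12 ((dist_comm x4 x3).trans d34) d13 d24 d14 d23)
          · exact e1
          · exact e2
          · exact e3
        · -- inr
          refine Or.inr ⟨x3, (x3 + x4 - x5), (x2 + x3 - x5), 1, one_pos, ?_, ?_, ?_, ?_, ?_, ?_⟩
          · exact ((dist_eq_of_sub_eq (show x3 - (x3 + x4 - x5) = x5 - x4 by abel)).trans ((dist_comm x5 x4).trans d45))
          · exact ((dist_eq_of_sub_eq (show (x3 + x4 - x5) - (x2 + x3 - x5) = x4 - x2 by abel)).trans ((dist_comm x4 x2).trans d24))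
          · exact ((dist_eq_of_sub_eq (show x3 - (x2 + x3 - x5) = x5 - x2 by abel)).trans ((dist_comm x5 x2).trans d25))
          · rw [hc3]; exact Ne.symm h34
          · rw [hc3]; exact Ne.symm h23
          · exact hnee3
      · -- inr
        refine Or.inr ⟨x4, (x1 + x4 - x5), (x3 + x4 - x5), 1, one_pos, ?_, ?_, ?_, ?_, ?_, ?_⟩
        · exact ((dist_eq_of_sub_eq (show x4 - (x1 + x4 - x5) = x5 - x1 by abel)).trans ((dist_comm x5 x1).trans d15))
        · exact ((dist_eq_of_sub_eq (show (x1 + x4 - x5) - (x3 + x4 - x5) = x1 - x3 by abel)).trans d13)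
        · exact ((dist_eq_of_sub_eq (show x4 - (x3 + x4 - x5) = x5 - x3 by abel)).trans ((dist_comm x5 x3).trans d35))
        · rw [hc4]; exact Ne.symm h14
        · rw [hc4]; exact Ne.symm h34
        · exact hnee2
    · -- inr
      refine Or.inr ⟨x1, (x1 + x2 - x5), (x1 + x4 - x5), 1, one_pos, ?_, ?_, ?_, ?_, ?_, ?_⟩
      · exact ((dist_eq_of_sub_eq (show x1 - (x1 + x2 - x5) = x5 - x2 by abel)).trans ((dist_comm x5 x2).trans d25))
      · exact ((dist_eq_of_sub_eq (show (x1 + x2 - x5) - (x1 + x4 - x5) = x2 - x4 by abel)).trans d24)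
      · exact ((dist_eq_of_sub_eq (show x1 - (x1 + x4 - x5) = x5 - x4 by abel)).trans ((dist_comm x5 x4).trans d45))
      · rw [hc1]; exact Ne.symm h12
      · rw [hc1]; exact Ne.symm h14
      · exact hnee1
  case neg =>
    by_cases h24 : c (x2 + x4 - x5) = c x1
    case pos =>
      by_cases h12 : c (x1 + x2 - x5) = c x1
      · refine Or.inl ⟨x1, x4, (x2 + x4 - x5), (x1 + x2 - x5), ?_, ?_, ?_, ?_, ?_, ?_, ?_, ?_, ?_⟩
        · exact d14
        · exact ((dist_eq_of_sub_eq (show x4 - (x2 + x4 - x5) = x5 - x2 by abel)).trans ((dist_comm x5 x2).trans d25))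
        · exact ((dist_eq_of_sub_eq (show (x2 + x4 - x5) - (x1 + x2 - x5) = x4 - x1 by abel)).trans ((dist_comm x4 x1).trans d14))
        · exact ((dist_eq_of_sub_eq (show (x1 + x2 - x5) - x1 = x2 - x5 by abel)).trans d25)
        · exact (dist_sqrt_two x1 (x2 + x4 - x5) x1 x2 x5 x4 (by abel) d12 ((dist_comm x5 x4).trans d45) d14 d25 d15 d24)
        · exact (dist_sqrt_two x4 (x1 + x2 - x5) x4 x1 x5 x2 (by abel) ((dist_comm x4 x1).trans d14) ((dist_comm x5 x2).trans d25) ((dist_comm x4 x2).trans d24) d15 d45 d12)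
        · exact hc1.trans hc4.symm
        · exact hc4.trans h24.symm
        · exact h24.trans h12.symm
      by_cases h14 : c (x1 + x4 - x5) = c x1
      · refine Or.inl ⟨x1, x2, (x2 + x4 - x5), (x1 + x4 - x5), ?_, ?_, ?_, ?_, ?_, ?_, ?_, ?_, ?_⟩
        · exact d12
        · exact ((dist_eq_of_sub_eq (show x2 - (x2 + x4 - x5) = x5 - x4 by abel)).trans ((dist_comm x5 x4).trans d45))
        · exact ((dist_eq_of_sub_eq (show (x2 + x4 - x5) - (x1 + x4 - x5) = x2 - x1 by abel)).trans ((dist_comm x2 x1).trans d12))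
        · exact ((dist_eq_of_sub_eq (show (x1 + x4 - x5) - x1 = x4 - x5 by abel)).trans d45)
        · exact (dist_sqrt_two x1 (x2 + x4 - x5) x1 x2 x5 x4 (by abel) d12 ((dist_comm x5 x4).trans d45) d14 d25 d15 d24)
        · exact (dist_sqrt_two x2 (x1 + x4 - x5) x2 x1 x5 x4 (by abel) ((dist_comm x2 x1).trans d12) ((dist_comm x5 x4).trans d45) d24 d15 d25 d14)
        · exact hc1.trans hc2.symm
        · exact hc2.trans h24.symm
        · exact h24.trans h14.symm
      by_cases h34 : c (x3 + x4 - x5) = c x1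
      · refine Or.inl ⟨x3, x2, (x2 + x4 - x5), (x3 + x4 - x5), ?_, ?_, ?_, ?_, ?_, ?_, ?_, ?_, ?_⟩
        · exact ((dist_comm x3 x2).trans d23)
        · exact ((dist_eq_of_sub_eq (show x2 - (x2 + x4 - x5) = x5 - x4 by abel)).trans ((dist_comm x5 x4).trans d45))
        · exact ((dist_eq_of_sub_eq (show (x2 + x4 - x5) - (x3 + x4 - x5) = x2 - x3 by abel)).trans d23)
        · exact ((dist_eq_of_sub_eq (show (x3 + x4 - x5) - x3 = x4 - x5 by abel)).trans d45)
        · exact (dist_sqrt_two x3 (x2 + x4 - x5) x3 x2 x5 x4 (by abel) ((dist_comm x3 x2).trans d23) ((dist_comm x5 x4).trans d45) d34 d25 d35 d24)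
        · exact (dist_sqrt_two x2 (x3 + x4 - x5) x2 x3 x5 x4 (by abel) d23 ((dist_comm x5 x4).trans d45) d24 d35 d25 d34)
        · exact hc3.trans hc2.symm
        · exact hc2.trans h24.symm
        · exact h24.trans h34.symm
      by_cases h23 : c (x2 + x3 - x5) = c x1
      · refine Or.inl ⟨x3, x4, (x2 + x4 - x5), (x2 + x3 - x5), ?_, ?_, ?_, ?_, ?_, ?_, ?_, ?_, ?_⟩
        · exact d34
        · exact ((dist_eq_of_sub_eq (show x4 - (x2 + x4 - x5) = x5 - x2 by abel)).trans ((dist_comm x5 x2).trans d25))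
        · exact ((dist_eq_of_sub_eq (show (x2 + x4 - x5) - (x2 + x3 - x5) = x4 - x3 by abel)).trans ((dist_comm x4 x3).trans d34))
        · exact ((dist_eq_of_sub_eq (show (x2 + x3 - x5) - x3 = x2 - x5 by abel)).trans d25)
        · exact (dist_sqrt_two x3 (x2 + x4 - x5) x3 x2 x5 x4 (by abel) ((dist_comm x3 x2).trans d23) ((dist_comm x5 x4).trans d45) d34 d25 d35 d24)
        · exact (dist_sqrt_two x4 (x2 + x3 - x5) x4 x2 x5 x3 (by abel) ((dist_comm x4 x2).trans d24) ((dist_comm x5 x3).trans d35) ((dist_comm x4 x3).trans d34) d25 d45 d23)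
        · exact hc3.trans hc4.symm
        · exact hc4.trans h24.symm
        · exact h24.trans h23.symm
      rcases eq_or_ne (c (x1 + x2 - x5)) (c (x1 + x4 - x5)) with e1 | hnee1
      · -- inl
        rcases eq_or_ne (c (x1 + x4 - x5)) (c (x3 + x4 - x5)) with e2 | hnee2
        · -- inl
          rcases eq_or_ne (c (x3 + x4 - x5)) (c (x2 + x3 - x5)) with e3 | hnee3
          · -- inl
            refine Or.inl ⟨(x1 + x2 - x5), (x1 + x4 - x5), (x3 + x4 - x5), (x2 + x3 - x5), ?_, ?_, ?_, ?_, ?_, ?_, ?_, ?_, ?_⟩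
            · exact ((dist_eq_of_sub_eq (show (x1 + x2 - x5) - (x1 + x4 - x5) = x2 - x4 by abel)).trans d24)
            · exact ((dist_eq_of_sub_eq (show (x1 + x4 - x5) - (x3 + x4 - x5) = x1 - x3 by abel)).trans d13)
            · exact ((dist_eq_of_sub_eq (show (x3 + x4 - x5) - (x2 + x3 - x5) = x4 - x2 by abel)).trans ((dist_comm x4 x2).trans d24))
            · exact ((dist_eq_of_sub_eq (show (x2 + x3 - x5) - (x1 + x2 - x5) = x3 - x1 by abel)).trans ((dist_comm x3 x1).trans d13))
            · exact (dist_sqrt_two (x1 + x2 - x5) (x3 + x4 - x5) x1 x3 x2 x4 (by abel) d13 d24 d14 ((dist_comm x3 x2).trans d23) d12 d34)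
            · exact (dist_sqrt_two (x1 + x4 - x5) (x2 + x3 - x5) x1 x2 x4 x3 (by abel) d12 ((dist_comm x4 x3).trans d34) d13 d24 d14 d23)
            · exact e1
            · exact e2
            · exact e3
          · -- inr
            refine Or.inr ⟨x3, (x3 + x4 - x5), (x2 + x3 - x5), 1, one_pos, ?_, ?_, ?_, ?_, ?_, ?_⟩
            · exact ((dist_eq_of_sub_eq (show x3 - (x3 + x4 - x5) = x5 - x4 by abel)).trans ((dist_comm x5 x4).trans d45))
            · exact ((dist_eq_of_sub_eq (show (x3 + x4 - x5) - (x2 + x3 - x5) = x4 - x2 by abel)).trans ((dist_comm x4 x2).trans d24))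
            · exact ((dist_eq_of_sub_eq (show x3 - (x2 + x3 - x5) = x5 - x2 by abel)).trans ((dist_comm x5 x2).trans d25))
            · rw [hc3]; exact Ne.symm h34
            · rw [hc3]; exact Ne.symm h23
            · exact hnee3
        · -- inr
          refine Or.inr ⟨x4, (x1 + x4 - x5), (x3 + x4 - x5), 1, one_pos, ?_, ?_, ?_, ?_, ?_, ?_⟩
          · exact ((dist_eq_of_sub_eq (show x4 - (x1 + x4 - x5) = x5 - x1 by abel)).trans ((dist_comm x5 x1).trans d15))
          · exact ((dist_eq_of_sub_eq (show (x1 + x4 - x5) - (x3 + x4 - x5) = x1 - x3 by abel)).trans d13)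
          · exact ((dist_eq_of_sub_eq (show x4 - (x3 + x4 - x5) = x5 - x3 by abel)).trans ((dist_comm x5 x3).trans d35))
          · rw [hc4]; exact Ne.symm h14
          · rw [hc4]; exact Ne.symm h34
          · exact hnee2
      · -- inr
        refine Or.inr ⟨x1, (x1 + x2 - x5), (x1 + x4 - x5), 1, one_pos, ?_, ?_, ?_, ?_, ?_, ?_⟩
        · exact ((dist_eq_of_sub_eq (show x1 - (x1 + x2 - x5) = x5 - x2 by abel)).trans ((dist_comm x5 x2).trans d25))
        · exact ((dist_eq_of_sub_eq (show (x1 + x2 - x5) - (x1 + x4 - x5) = x2 - x4 by abel)).trans d24)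
        · exact ((dist_eq_of_sub_eq (show x1 - (x1 + x4 - x5) = x5 - x4 by abel)).trans ((dist_comm x5 x4).trans d45))
        · rw [hc1]; exact Ne.symm h12
        · rw [hc1]; exact Ne.symm h14
        · exact hnee1
    case neg =>
      by_cases h14 : c (x1 + x4 - x5) = c x1
      case pos =>
        by_cases h12 : c (x1 + x2 - x5) = c x1
        · refine Or.inl ⟨x2, x4, (x1 + x4 - x5), (x1 + x2 - x5), ?_, ?_, ?_, ?_, ?_, ?_, ?_, ?_, ?_⟩
          · exact d24
          · exact ((dist_eq_of_sub_eq (show x4 - (x1 + x4 - x5) = x5 - x1 by abel)).trans ((dist_comm x5 x1).trans d15))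
          · exact ((dist_eq_of_sub_eq (show (x1 + x4 - x5) - (x1 + x2 - x5) = x4 - x2 by abel)).trans ((dist_comm x4 x2).trans d24))
          · exact ((dist_eq_of_sub_eq (show (x1 + x2 - x5) - x2 = x1 - x5 by abel)).trans d15)
          · exact (dist_sqrt_two x2 (x1 + x4 - x5) x2 x1 x5 x4 (by abel) ((dist_comm x2 x1).trans d12) ((dist_comm x5 x4).trans d45) d24 d15 d25 d14)
          · exact (dist_sqrt_two x4 (x1 + x2 - x5) x4 x1 x5 x2 (by abel) ((dist_comm x4 x1).trans d14) ((dist_comm x5 x2).trans d25) ((dist_comm x4 x2).trans d24) d15 d45 d12)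
          · exact hc2.trans hc4.symm
          · exact hc4.trans h14.symm
          · exact h14.trans h12.symm
        by_cases h34 : c (x3 + x4 - x5) = c x1
        · refine Or.inl ⟨x3, x1, (x1 + x4 - x5), (x3 + x4 - x5), ?_, ?_, ?_, ?_, ?_, ?_, ?_, ?_, ?_⟩
          · exact ((dist_comm x3 x1).trans d13)
          · exact ((dist_eq_of_sub_eq (show x1 - (x1 + x4 - x5) = x5 - x4 by abel)).trans ((dist_comm x5 x4).trans d45))
          · exact ((dist_eq_of_sub_eq (show (x1 + x4 - x5) - (x3 + x4 - x5) = x1 - x3 by abel)).trans d13)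
          · exact ((dist_eq_of_sub_eq (show (x3 + x4 - x5) - x3 = x4 - x5 by abel)).trans d45)
          · exact (dist_sqrt_two x3 (x1 + x4 - x5) x3 x1 x5 x4 (by abel) ((dist_comm x3 x1).trans d13) ((dist_comm x5 x4).trans d45) d34 d15 d35 d14)
          · exact (dist_sqrt_two x1 (x3 + x4 - x5) x1 x3 x5 x4 (by abel) d13 ((dist_comm x5 x4).trans d45) d14 d35 d15 d34)
          · exact hc3.trans hc1.symm
          · exact hc1.trans h14.symm
          · exact h14.trans h34.symm
        rcases eq_or_ne (c (x1 + x2 - x5)) (c (x1 + x3 - x5)) with e1 | hnee1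
        · -- inl
          rcases eq_or_ne (c (x1 + x3 - x5)) (c (x3 + x4 - x5)) with e2 | hnee2
          · -- inl
            rcases eq_or_ne (c (x3 + x4 - x5)) (c (x2 + x4 - x5)) with e3 | hnee3
            · -- inl
              refine Or.inl ⟨(x1 + x2 - x5), (x1 + x3 - x5), (x3 + x4 - x5), (x2 + x4 - x5), ?_, ?_, ?_, ?_, ?_, ?_, ?_, ?_, ?_⟩
              · exact ((dist_eq_of_sub_eq (show (x1 + x2 - x5) - (x1 + x3 - x5) = x2 - x3 by abel)).trans d23)
              · exact ((dist_eq_of_sub_eq (show (x1 + x3 - x5) - (x3 + x4 - x5) = x1 - x4 by abel)).trans d14)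
              · exact ((dist_eq_of_sub_eq (show (x3 + x4 - x5) - (x2 + x4 - x5) = x3 - x2 by abel)).trans ((dist_comm x3 x2).trans d23))
              · exact ((dist_eq_of_sub_eq (show (x2 + x4 - x5) - (x1 + x2 - x5) = x4 - x1 by abel)).trans ((dist_comm x4 x1).trans d14))
              · exact (dist_sqrt_two (x1 + x2 - x5) (x3 + x4 - x5) x1 x3 x2 x4 (by abel) d13 d24 d14 ((dist_comm x3 x2).trans d23) d12 d34)
              · exact (dist_sqrt_two (x1 + x3 - x5) (x2 + x4 - x5) x1 x2 x3 x4 (by abel) d12 d34 d14 d23 d13 d24)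
              · exact e1
              · exact e2
              · exact e3
            · -- inr
              refine Or.inr ⟨x4, (x3 + x4 - x5), (x2 + x4 - x5), 1, one_pos, ?_, ?_, ?_, ?_, ?_, ?_⟩
              · exact ((dist_eq_of_sub_eq (show x4 - (x3 + x4 - x5) = x5 - x3 by abel)).trans ((dist_comm x5 x3).trans d35))
              · exact ((dist_eq_of_sub_eq (show (x3 + x4 - x5) - (x2 + x4 - x5) = x3 - x2 by abel)).trans ((dist_comm x3 x2).trans d23))
              · exact ((dist_eq_of_sub_eq (show x4 - (x2 + x4 - x5) = x5 - x2 by abel)).trans ((dist_comm x5 x2).trans d25))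
              · rw [hc4]; exact Ne.symm h34
              · rw [hc4]; exact Ne.symm h24
              · exact hnee3
          · -- inr
            refine Or.inr ⟨x3, (x1 + x3 - x5), (x3 + x4 - x5), 1, one_pos, ?_, ?_, ?_, ?_, ?_, ?_⟩
            · exact ((dist_eq_of_sub_eq (show x3 - (x1 + x3 - x5) = x5 - x1 by abel)).trans ((dist_comm x5 x1).trans d15))
            · exact ((dist_eq_of_sub_eq (show (x1 + x3 - x5) - (x3 + x4 - x5) = x1 - x4 by abel)).trans d14)
            · exact ((dist_eq_of_sub_eq (show x3 - (x3 + x4 - x5) = x5 - x4 by abel)).trans ((dist_comm x5 x4).trans d45))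
            · rw [hc3]; exact Ne.symm h13
            · rw [hc3]; exact Ne.symm h34
            · exact hnee2
        · -- inr
          refine Or.inr ⟨x1, (x1 + x2 - x5), (x1 + x3 - x5), 1, one_pos, ?_, ?_, ?_, ?_, ?_, ?_⟩
          · exact ((dist_eq_of_sub_eq (show x1 - (x1 + x2 - x5) = x5 - x2 by abel)).trans ((dist_comm x5 x2).trans d25))
          · exact ((dist_eq_of_sub_eq (show (x1 + x2 - x5) - (x1 + x3 - x5) = x2 - x3 by abel)).trans d23)
          · exact ((dist_eq_of_sub_eq (show x1 - (x1 + x3 - x5) = x5 - x3 by abel)).trans ((dist_comm x5 x3).trans d35))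
          · rw [hc1]; exact Ne.symm h12
          · rw [hc1]; exact Ne.symm h13
          · exact hnee1
      case neg =>
        by_cases h23 : c (x2 + x3 - x5) = c x1
        case pos =>
          by_cases h12 : c (x1 + x2 - x5) = c x1
          · refine Or.inl ⟨x1, x3, (x2 + x3 - x5), (x1 + x2 - x5), ?_, ?_, ?_, ?_, ?_, ?_, ?_, ?_, ?_⟩
            · exact d13
            · exact ((dist_eq_of_sub_eq (show x3 - (x2 + x3 - x5) = x5 - x2 by abel)).trans ((dist_comm x5 x2).trans d25))
            · exact ((dist_eq_of_sub_eq (show (x2 + x3 - x5) - (x1 + x2 - x5) = x3 - x1 by abel)).trans ((dist_comm x3 x1).trans d13))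
            · exact ((dist_eq_of_sub_eq (show (x1 + x2 - x5) - x1 = x2 - x5 by abel)).trans d25)
            · exact (dist_sqrt_two x1 (x2 + x3 - x5) x1 x2 x5 x3 (by abel) d12 ((dist_comm x5 x3).trans d35) d13 d25 d15 d23)
            · exact (dist_sqrt_two x3 (x1 + x2 - x5) x3 x1 x5 x2 (by abel) ((dist_comm x3 x1).trans d13) ((dist_comm x5 x2).trans d25) ((dist_comm x3 x2).trans d23) d15 d35 d12)
            · exact hc1.trans hc3.symm
            · exact hc3.trans h23.symm
            · exact h23.trans h12.symm
          by_cases h34 : c (x3 + x4 - x5) = c x1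
          · refine Or.inl ⟨x4, x2, (x2 + x3 - x5), (x3 + x4 - x5), ?_, ?_, ?_, ?_, ?_, ?_, ?_, ?_, ?_⟩
            · exact ((dist_comm x4 x2).trans d24)
            · exact ((dist_eq_of_sub_eq (show x2 - (x2 + x3 - x5) = x5 - x3 by abel)).trans ((dist_comm x5 x3).trans d35))
            · exact ((dist_eq_of_sub_eq (show (x2 + x3 - x5) - (x3 + x4 - x5) = x2 - x4 by abel)).trans d24)
            · exact ((dist_eq_of_sub_eq (show (x3 + x4 - x5) - x4 = x3 - x5 by abel)).trans d35)
            · exact (dist_sqrt_two x4 (x2 + x3 - x5) x4 x2 x5 x3 (by abel) ((dist_comm x4 x2).trans d24) ((dist_comm x5 x3).trans d35) ((dist_comm x4 x3).trans d34) d25 d45 d23)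
            · exact (dist_sqrt_two x2 (x3 + x4 - x5) x2 x3 x5 x4 (by abel) d23 ((dist_comm x5 x4).trans d45) d24 d35 d25 d34)
            · exact hc4.trans hc2.symm
            · exact hc2.trans h23.symm
            · exact h23.trans h34.symm
          rcases eq_or_ne (c (x1 + x2 - x5)) (c (x1 + x3 - x5)) with e1 | hnee1
          · -- inl
            rcases eq_or_ne (c (x1 + x3 - x5)) (c (x3 + x4 - x5)) with e2 | hnee2
            · -- inl
              rcases eq_or_ne (c (x3 + x4 - x5)) (c (x2 + x4 - x5)) with e3 | hnee3
              · -- inl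
                refine Or.inl ⟨(x1 + x2 - x5), (x1 + x3 - x5), (x3 + x4 - x5), (x2 + x4 - x5), ?_, ?_, ?_, ?_, ?_, ?_, ?_, ?_, ?_⟩
                · exact ((dist_eq_of_sub_eq (show (x1 + x2 - x5) - (x1 + x3 - x5) = x2 - x3 by abel)).trans d23)
                · exact ((dist_eq_of_sub_eq (show (x1 + x3 - x5) - (x3 + x4 - x5) = x1 - x4 by abel)).trans d14)
                · exact ((dist_eq_of_sub_eq (show (x3 + x4 - x5) - (x2 + x4 - x5) = x3 - x2 by abel)).trans ((dist_comm x3 x2).trans d23))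
                · exact ((dist_eq_of_sub_eq (show (x2 + x4 - x5) - (x1 + x2 - x5) = x4 - x1 by abel)).trans ((dist_comm x4 x1).trans d14))
                · exact (dist_sqrt_two (x1 + x2 - x5) (x3 + x4 - x5) x1 x3 x2 x4 (by abel) d13 d24 d14 ((dist_comm x3 x2).trans d23) d12 d34)
                · exact (dist_sqrt_two (x1 + x3 - x5) (x2 + x4 - x5) x1 x2 x3 x4 (by abel) d12 d34 d14 d23 d13 d24)
                · exact e1
                · exact e2
                · exact e3
              · -- inr
                refine Or.inr ⟨x4, (x3 + x4 - x5), (x2 + x4 - x5), 1, one_pos, ?_, ?_, ?_, ?_, ?_, ?_⟩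
                · exact ((dist_eq_of_sub_eq (show x4 - (x3 + x4 - x5) = x5 - x3 by abel)).trans ((dist_comm x5 x3).trans d35))
                · exact ((dist_eq_of_sub_eq (show (x3 + x4 - x5) - (x2 + x4 - x5) = x3 - x2 by abel)).trans ((dist_comm x3 x2).trans d23))
                · exact ((dist_eq_of_sub_eq (show x4 - (x2 + x4 - x5) = x5 - x2 by abel)).trans ((dist_comm x5 x2).trans d25))
                · rw [hc4]; exact Ne.symm h34
                · rw [hc4]; exact Ne.symm h24
                · exact hnee3
            · -- inr
              refine Or.inr ⟨x3, (x1 + x3 - x5), (x3 + x4 - x5), 1, one_pos, ?_, ?_, ?_, ?_, ?_, ?_⟩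
              · exact ((dist_eq_of_sub_eq (show x3 - (x1 + x3 - x5) = x5 - x1 by abel)).trans ((dist_comm x5 x1).trans d15))
              · exact ((dist_eq_of_sub_eq (show (x1 + x3 - x5) - (x3 + x4 - x5) = x1 - x4 by abel)).trans d14)
              · exact ((dist_eq_of_sub_eq (show x3 - (x3 + x4 - x5) = x5 - x4 by abel)).trans ((dist_comm x5 x4).trans d45))
              · rw [hc3]; exact Ne.symm h13
              · rw [hc3]; exact Ne.symm h34
              · exact hnee2
          · -- inr
            refine Or.inr ⟨x1, (x1 + x2 - x5), (x1 + x3 - x5), 1, one_pos, ?_, ?_, ?_, ?_, ?_, ?_⟩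
            · exact ((dist_eq_of_sub_eq (show x1 - (x1 + x2 - x5) = x5 - x2 by abel)).trans ((dist_comm x5 x2).trans d25))
            · exact ((dist_eq_of_sub_eq (show (x1 + x2 - x5) - (x1 + x3 - x5) = x2 - x3 by abel)).trans d23)
            · exact ((dist_eq_of_sub_eq (show x1 - (x1 + x3 - x5) = x5 - x3 by abel)).trans ((dist_comm x5 x3).trans d35))
            · rw [hc1]; exact Ne.symm h12
            · rw [hc1]; exact Ne.symm h13
            · exact hnee1
        case neg =>
          rcases eq_or_ne (c (x1 + x3 - x5)) (c (x1 + x4 - x5)) with e1 | hnee1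
          · -- inl
            rcases eq_or_ne (c (x1 + x4 - x5)) (c (x2 + x4 - x5)) with e2 | hnee2
            · -- inl
              rcases eq_or_ne (c (x2 + x4 - x5)) (c (x2 + x3 - x5)) with e3 | hnee3
              · -- inl
                refine Or.inl ⟨(x1 + x3 - x5), (x1 + x4 - x5), (x2 + x4 - x5), (x2 + x3 - x5), ?_, ?_, ?_, ?_, ?_, ?_, ?_, ?_, ?_⟩
                · exact ((dist_eq_of_sub_eq (show (x1 + x3 - x5) - (x1 + x4 - x5) = x3 - x4 by abel)).trans d34)
                · exact ((dist_eq_of_sub_eq (show (x1 + x4 - x5) - (x2 + x4 - x5) = x1 - x2 by abel)).trans d12)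
                · exact ((dist_eq_of_sub_eq (show (x2 + x4 - x5) - (x2 + x3 - x5) = x4 - x3 by abel)).trans ((dist_comm x4 x3).trans d34))
                · exact ((dist_eq_of_sub_eq (show (x2 + x3 - x5) - (x1 + x3 - x5) = x2 - x1 by abel)).trans ((dist_comm x2 x1).trans d12))
                · exact (dist_sqrt_two (x1 + x3 - x5) (x2 + x4 - x5) x1 x2 x3 x4 (by abel) d12 d34 d14 d23 d13 d24)
                · exact (dist_sqrt_two (x1 + x4 - x5) (x2 + x3 - x5) x1 x2 x4 x3 (by abel) d12 ((dist_comm x4 x3).trans d34) d13 d24 d14 d23)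
                · exact e1
                · exact e2
                · exact e3
              · -- inr
                refine Or.inr ⟨x2, (x2 + x4 - x5), (x2 + x3 - x5), 1, one_pos, ?_, ?_, ?_, ?_, ?_, ?_⟩
                · exact ((dist_eq_of_sub_eq (show x2 - (x2 + x4 - x5) = x5 - x4 by abel)).trans ((dist_comm x5 x4).trans d45))
                · exact ((dist_eq_of_sub_eq (show (x2 + x4 - x5) - (x2 + x3 - x5) = x4 - x3 by abel)).trans ((dist_comm x4 x3).trans d34))
                · exact ((dist_eq_of_sub_eq (show x2 - (x2 + x3 - x5) = x5 - x3 by abel)).trans ((dist_comm x5 x3).trans d35))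
                · rw [hc2]; exact Ne.symm h24
                · rw [hc2]; exact Ne.symm h23
                · exact hnee3
            · -- inr
              refine Or.inr ⟨x4, (x1 + x4 - x5), (x2 + x4 - x5), 1, one_pos, ?_, ?_, ?_, ?_, ?_, ?_⟩
              · exact ((dist_eq_of_sub_eq (show x4 - (x1 + x4 - x5) = x5 - x1 by abel)).trans ((dist_comm x5 x1).trans d15))
              · exact ((dist_eq_of_sub_eq (show (x1 + x4 - x5) - (x2 + x4 - x5) = x1 - x2 by abel)).trans d12)
              · exact ((dist_eq_of_sub_eq (show x4 - (x2 + x4 - x5) = x5 - x2 by abel)).trans ((dist_comm x5 x2).trans d25))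
              · rw [hc4]; exact Ne.symm h14
              · rw [hc4]; exact Ne.symm h24
              · exact hnee2
          · -- inr
            refine Or.inr ⟨x1, (x1 + x3 - x5), (x1 + x4 - x5), 1, one_pos, ?_, ?_, ?_, ?_, ?_, ?_⟩
            · exact ((dist_eq_of_sub_eq (show x1 - (x1 + x3 - x5) = x5 - x3 by abel)).trans ((dist_comm x5 x3).trans d35))
            · exact ((dist_eq_of_sub_eq (show (x1 + x3 - x5) - (x1 + x4 - x5) = x3 - x4 by abel)).trans d34)
            · exact ((dist_eq_of_sub_eq (show x1 - (x1 + x4 - x5) = x5 - x4 by abel)).trans ((dist_comm x5 x4).trans d45))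
            · rw [hc1]; exact Ne.symm h13
            · rw [hc1]; exact Ne.symm h14
            · exact hnee1


end EuclideanRamseyHelpers

theorem mono_unit_square_or_rainbow_equilateral
    (r : ℕ) (hr : 0 < r)
    (c : EuclideanSpace ℝ (Fin (r + 4)) → Fin r) :
    (∃ p₁ p₂ p₃ p₄ : EuclideanSpace ℝ (Fin (r + 4)),
      dist p₁ p₂ = 1 ∧ dist p₂ p₃ = 1 ∧ dist p₃ p₄ = 1 ∧ dist p₄ p₁ = 1 ∧
      dist p₁ p₃ = Real.sqrt 2 ∧ dist p₂ p₄ = Real.sqrt 2 ∧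
      c p₁ = c p₂ ∧ c p₂ = c p₃ ∧ c p₃ = c p₄) ∨
    (∃ (A B C : EuclideanSpace ℝ (Fin (r + 4))) (d : ℝ), 0 < d ∧
      dist A B = d ∧ dist B C = d ∧ dist A C = d ∧
      c A ≠ c B ∧ c A ≠ c C ∧ c B ≠ c C) := by
  classical
  rcases Nat.lt_or_ge r 2 with hr2 | hr2
  · -- r = 1 : all colors equal, exhibit any unit square
    have hr1 : r = 1 := by omega
    subst hr1
    have hsub : Subsingleton (Fin 1) := by infer_instance
    set u : EuclideanSpace ℝ (Fin (1+4)) := EuclideanSpace.single ⟨0, by norm_num⟩ (1:ℝ) with hu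
    set v : EuclideanSpace ℝ (Fin (1+4)) := EuclideanSpace.single ⟨1, by norm_num⟩ (1:ℝ) with hv
    have hne01 : (⟨0, by norm_num⟩ : Fin (1+4)) ≠ ⟨1, by norm_num⟩ := by
      intro h
      simpa using congrArg Fin.val h
    have hnu : ‖u‖ = 1 := by rw [hu, EuclideanSpace.norm_single, norm_one]
    have hnv : ‖v‖ = 1 := by rw [hv, EuclideanSpace.norm_single, norm_one]
    have hinner : (inner ℝ u v : ℝ) = 0 := by
      rw [hu, hv, EuclideanSpace.inner_single_left, EuclideanSpace.single_apply,
        if_neg hne01]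
      simp
    left
    refine ⟨0, u, u + v, v, ?_, ?_, ?_, ?_, ?_, ?_,
      Subsingleton.elim _ _, Subsingleton.elim _ _, Subsingleton.elim _ _⟩
    · rw [dist_zero_left, hnu]
    · rw [dist_eq_norm, show u - (u + v) = -v by abel, norm_neg, hnv]
    · rw [dist_eq_norm, show u + v - v = u by abel, hnu]
    · rw [dist_zero_right, hnv]
    · rw [dist_zero_left]
      refine norm_eq_sqrt_two _ ?_
      rw [norm_add_sq_real, hnu, hnv, hinner]
      norm_num
    · rw [dist_eq_norm]
      refine norm_eq_sqrt_two _ ?_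
      rw [norm_sub_sq_real, hnu, hnv, hinner]
      norm_num
  · -- r ≥ 2
    have hn : 6 ≤ r + 4 := by omega
    obtain ⟨P, hP⟩ := simplex7 hn
    by_cases hone : ∀ i, c (P i) = c (P 0)
    · exact endgame c (P 0) (P 1) (P 2) (P 3) (P 4)
        (hP _ _ (by decide)) (hP _ _ (by decide)) (hP _ _ (by decide)) (hP _ _ (by decide))
        (hP _ _ (by decide)) (hP _ _ (by decide)) (hP _ _ (by decide)) (hP _ _ (by decide))
        (hP _ _ (by decide)) (hP _ _ (by decide))
        (hone 1) (hone 2) (hone 3)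
    · push_neg at hone
      obtain ⟨j0, hj0⟩ := hone
      by_cases htwo : ∀ i, c (P i) = c (P 0) ∨ c (P i) = c (P j0)
      · obtain ⟨i, j, k, l, nij, nik, nil, njk, njl, nkl, ej, ek, el⟩ :=
          four_of_seven (fun i => decide (c (P i) = c (P 0)))
        have key : ∀ s t : Fin 7,
            decide (c (P s) = c (P 0)) = decide (c (P t) = c (P 0)) →
            c (P s) = c (P t) := by
          intro s t h
          by_cases hs : c (P s) = c (P 0) <;> by_cases ht : c (P t) = c (P 0)
          · exact hs.trans ht.symm
          · simp [hs, ht] at h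
          · simp [hs, ht] at h
          · exact ((htwo s).resolve_left hs).trans (((htwo t).resolve_left ht)).symm
        obtain ⟨m, hmi, hmj, hmk, hml⟩ := fifth_index i j k l
        exact endgame c (P i) (P j) (P k) (P l) (P m)
          (hP _ _ nij) (hP _ _ nik) (hP _ _ nil) (hP _ _ (Ne.symm hmi))
          (hP _ _ njk) (hP _ _ njl) (hP _ _ (Ne.symm hmj))
          (hP _ _ nkl) (hP _ _ (Ne.symm hmk)) (hP _ _ (Ne.symm hml))
          (key j i ej) (key k i ek) (key l i el)
      · push_neg at htwo
        obtain ⟨k, hk1, hk2⟩ := htwo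
        have hj00 : j0 ≠ 0 := fun h => hj0 (by rw [h])
        have hk0 : k ≠ 0 := fun h => hk1 (by rw [h])
        have hkj : k ≠ j0 := fun h => hk2 (by rw [h])
        exact Or.inr ⟨P 0, P j0, P k, 1, one_pos,
          hP _ _ (Ne.symm hj00), hP _ _ (Ne.symm hkj), hP _ _ (Ne.symm hk0),
          Ne.symm hj0, Ne.symm hk1, Ne.symm hk2⟩
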